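/- Let K be an algebraically closed field of characteristic 0, r, s ∈ K*, and f ∈ K[h] not conformal for (r,s), i.e., there is no g with f(h) = s·g(h) − g(r·h). Write f = f_c + f_nc where f_c is conformal and s = rⁱ for all i ∈ supp(f_nc). Then with j = min supp(f_nc), one has s = r^j and f_nc = h^j · F where F is a nonzero polynomial; moreover if r is not a root of unity then F is a nonzero constant, and if r has multiplicative order l ≥ 1 then F is a polynomial in h^l. -/

import Mathlib

open Polynomial

lemma conformal_of_support {K : Type*} [Field K] (r s : K) (p : K[X])
    (h : ∀ i ∈ p.support, s ≠ r ^ i) :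
    ∃ g : K[X], p = C s * g - g.comp (C r * X) := by
  refine ⟨∑ i ∈ p.support, C (p.coeff i / (s - r ^ i)) * X ^ i, ?_⟩
  rw [Finset.mul_sum]
  have hcomp : (∑ i ∈ p.support, C (p.coeff i / (s - r ^ i)) * X ^ i).comp (C r * X)
      = ∑ i ∈ p.support, C (p.coeff i / (s - r ^ i) * r ^ i) * X ^ i := by
    rw [Polynomial.comp, Polynomial.eval₂_finset_sum]
    refine Finset.sum_congr rfl fun i hi => ?_
    rw [eval₂_mul, eval₂_C, eval₂_X_pow, mul_pow, ← C_pow, ← mul_assoc, ← C_mul]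
  rw [hcomp, ← Finset.sum_sub_distrib]
  conv_lhs => rw [p.as_sum_support_C_mul_X_pow]
  refine Finset.sum_congr rfl fun i hi => ?_
  have hne : s - r ^ i ≠ 0 := sub_ne_zero.mpr (h i hi)
  rw [← mul_assoc, ← C_mul, ← sub_mul, ← C_sub]
  congr 2
  field_simp

/-- Decomposition of a non-conformal polynomial: if `f = f_c + f_nc` with `f_c`
conformal (i.e. `s ≠ rⁱ` on its support) and `s = rⁱ` for all `i ∈ supp(f_nc)`,
then `f_nc ≠ 0` and, with `j = min supp(f_nc)`, one has `j ∈ supp(f)`, `s = r^j`,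
`f_nc = h^j · F` with `F ≠ 0`; moreover `F` is constant if `r` is not a root of
unity, and `F` is a polynomial in `h^l` if `r` has multiplicative order `l ≥ 1`. -/
theorem not_conformal_decomposition {K : Type*} [Field K] [IsAlgClosed K] [CharZero K]
    (r s : K) (hr : r ≠ 0) (hs : s ≠ 0) (f fc fnc : K[X])
    (hdec : f = fc + fnc)
    (hfc : ∀ i ∈ fc.support, s ≠ r ^ i)
    (hfnc : ∀ i ∈ fnc.support, s = r ^ i)
    (hnc : ¬ ∃ g : K[X], f = C s * g - g.comp (C r * X)) :
    fnc ≠ 0 ∧ ∃ j : ℕ, ∃ F : K[X],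
      j = fnc.natTrailingDegree ∧ j ∈ f.support ∧ s = r ^ j ∧ fnc = X ^ j * F ∧ F ≠ 0 ∧
      ((∀ n : ℕ, 1 ≤ n → r ^ n ≠ 1) → ∃ c : K, F = C c) ∧
      (∀ l : ℕ, 1 ≤ l → r ^ l = 1 → (∀ m : ℕ, 0 < m → m < l → r ^ m ≠ 1) →
        ∃ G : K[X], F = G.comp (X ^ l)) := by
  have hfnc0 : fnc ≠ 0 := by
    intro h0
    apply hnc
    rw [hdec, h0, add_zero]
    exact conformal_of_support r s fc hfc
  refine ⟨hfnc0, ?_⟩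
  set j := fnc.natTrailingDegree with hj
  have hjmem : j ∈ fnc.support := natTrailingDegree_mem_support_of_nonzero hfnc0
  have hsrj : s = r ^ j := hfnc j hjmem
  -- j ∈ f.support
  have hfcj : fc.coeff j = 0 := by
    by_contra h
    exact hfc j (mem_support_iff.mpr h) hsrj
  have hjf : j ∈ f.support := by
    rw [mem_support_iff, hdec, coeff_add, hfcj, zero_add]
    exact mem_support_iff.mp hjmem
  -- factor
  obtain ⟨F, hF⟩ : X ^ j ∣ fnc :=
    X_pow_dvd_iff.mpr fun d hd => coeff_eq_zero_of_lt_natTrailingDegree hd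
  have hF0 : F ≠ 0 := by
    intro h
    rw [h, mul_zero] at hF
    exact hfnc0 hF
  -- key coefficient relation: for k in F.support, r^k = 1
  have hkey : ∀ k ∈ F.support, r ^ k = 1 := by
    intro k hk
    have hco : fnc.coeff (j + k) = F.coeff k := by
      rw [hF, add_comm j k, coeff_X_pow_mul]
    have hmem : j + k ∈ fnc.support := by
      rw [mem_support_iff, hco]
      exact mem_support_iff.mp hk
    have := hfnc (j + k) hmem
    rw [hsrj, pow_add] at this
    have hrj : r ^ j ≠ 0 := pow_ne_zero _ hr
    field_simp at this
    exact this.symm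
  refine ⟨j, F, rfl, hjf, hsrj, hF, hF0, ?_, ?_⟩
  · intro hnru
    refine ⟨F.coeff 0, ?_⟩
    have : ∀ k ∈ F.support, k = 0 := by
      intro k hk
      by_contra hk0
      exact hnru k (Nat.one_le_iff_ne_zero.mpr hk0) (hkey k hk)
    ext n
    rcases Nat.eq_zero_or_pos n with h | h
    · simp [h]
    · rw [coeff_C, if_neg h.ne']
      by_contra hc
      exact absurd (this n (mem_support_iff.mpr hc)) h.ne'
  · intro l hl hrl hmin
    have hdvd : ∀ k ∈ F.support, l ∣ k := by
      intro k hk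
      have h1 : r ^ k = 1 := hkey k hk
      have h2 : r ^ (k % l) = 1 := by
        have h3 : r ^ (k % l + l * (k / l)) = 1 := by rw [Nat.mod_add_div]; exact h1
        rwa [pow_add, pow_mul, hrl, one_pow, mul_one] at h3
      rcases Nat.eq_zero_or_pos (k % l) with h | h
      · exact Nat.dvd_of_mod_eq_zero h
      · exact absurd h2 (hmin _ h (Nat.mod_lt _ hl))
    refine ⟨∑ i ∈ F.support, C (F.coeff i) * X ^ (i / l), ?_⟩
    rw [Polynomial.comp, Polynomial.eval₂_finset_sum]
    conv_lhs => rw [F.as_sum_support_C_mul_X_pow]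
    refine Finset.sum_congr rfl fun i hi => ?_
    rw [eval₂_mul, eval₂_C, eval₂_X_pow, ← pow_mul, Nat.mul_div_cancel' (hdvd i hi)]
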